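/- Any holomorphic map from ℂ to ℂ \ {0, 1} is constant (little Picard theorem), i.e. the complement of three points in the Riemann sphere is Brody hyperbolic. -/

import Mathlib

open Complex Metric Set

lemma diff_of_deriv {f : ℂ → ℂ} (hf : Differentiable ℂ f) : Differentiable ℂ (deriv f) :=
  (contDiff_succ_iff_deriv.mp ((hf.contDiff : ContDiff ℂ (1+1) f))).2.2.differentiable one_ne_zero

lemma exists_primitive (f : ℂ → ℂ) (hf : Differentiable ℂ f) :
    ∃ F : ℂ → ℂ, Differentiable ℂ F ∧ ∀ z, deriv F z = f z := by
  set a : ℕ → ℂ := fun n => (n.factorial : ℂ)⁻¹ * iteratedDeriv n f 0 with ha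
  set b : ℕ → ℂ := fun n => if n = 0 then 0 else a (n-1) / n with hb
  set q : FormalMultilinearSeries ℂ ℂ ℂ := FormalMultilinearSeries.ofScalars ℂ b with hq
  have hsum : ∀ z : ℂ, HasSum (fun n => a n * z ^ n) (f z) := by
    intro z
    have := Complex.hasSum_taylorSeries_of_entire hf 0 z
    simpa [ha, sub_zero, smul_eq_mul, mul_comm, mul_assoc, mul_left_comm] using this
  have hrad : q.radius = ⊤ := by
    apply ENNReal.eq_top_of_forall_nnreal_le
    intro r
    obtain ⟨C, hC⟩ : ∃ C, ∀ n, ‖a n * ((r : ℂ) + 1) ^ n‖ ≤ C := by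
      have h0 : Filter.Tendsto (fun n => ‖a n * ((r : ℂ) + 1) ^ n‖) Filter.atTop (nhds 0) := by
        rw [show (0:ℝ) = ‖(0:ℂ)‖ by simp]
        exact ((hsum ((r : ℂ) + 1)).summable.tendsto_atTop_zero).norm
      obtain ⟨C, hC⟩ := h0.bddAbove_range
      exact ⟨C, fun n => hC (Set.mem_range_self n)⟩
    apply q.le_radius_of_bound (C * r + C)
    intro n
    have hCpos : 0 ≤ C := le_trans (norm_nonneg _) (hC 0)
    rcases n with _ | n
    · have hnorm : ‖q 0‖ = ‖b 0‖ := FormalMultilinearSeries.ofScalars_norm ℂ b 0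
      simp [hnorm, hb]; positivity
    · have hnorm : ‖q (n+1)‖ = ‖b (n+1)‖ := FormalMultilinearSeries.ofScalars_norm ℂ b (n+1)
      have h1 : ‖b (n+1)‖ ≤ ‖a n‖ := by
        simp only [hb, if_neg (Nat.succ_ne_zero n), Nat.add_sub_cancel]
        rw [norm_div]
        apply div_le_of_le_mul₀ (by positivity) (norm_nonneg _)
        have h3 : (1:ℝ) ≤ ‖((n+1 : ℕ) : ℂ)‖ := by
          rw [Complex.norm_natCast]
          exact_mod_cast Nat.one_le_iff_ne_zero.mpr (Nat.succ_ne_zero n)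
        nlinarith [norm_nonneg (a n)]
      have h2 : ‖a n‖ * (r : ℝ) ^ n ≤ C := by
        calc ‖a n‖ * (r:ℝ) ^ n ≤ ‖a n‖ * ((r:ℝ)+1) ^ n := by
              apply mul_le_mul_of_nonneg_left _ (norm_nonneg _)
              exact pow_le_pow_left₀ r.coe_nonneg (by linarith) n
          _ = ‖a n‖ * ‖((r:ℂ)+1) ^ n‖ := by
              congr 1
              rw [norm_pow, show ((r:ℂ)+1) = (((r:ℝ)+1 : ℝ) : ℂ) by push_cast; ring,
                Complex.norm_real, Real.norm_of_nonneg (by positivity)]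
          _ = ‖a n * ((r:ℂ)+1) ^ n‖ := (norm_mul _ _).symm
          _ ≤ C := hC n
      calc ‖q (n+1)‖ * (r:ℝ) ^ (n+1) ≤ ‖a n‖ * (r:ℝ)^n * r := by
            rw [hnorm, pow_succ, ← mul_assoc]
            apply mul_le_mul_of_nonneg_right _ r.coe_nonneg
            exact mul_le_mul_of_nonneg_right h1 (by positivity)
        _ ≤ C * r + C := by nlinarith [h2, r.coe_nonneg, hCpos]
  have hball : HasFPowerSeriesOnBall q.sum q 0 ⊤ := by
    have := q.hasFPowerSeriesOnBall (by rw [hrad]; exact ENNReal.zero_lt_top)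
    rwa [hrad] at this
  set F := q.sum with hF
  have hFdiff : Differentiable ℂ F := fun z => by
    have : AnalyticAt ℂ F z := hball.analyticAt_of_mem (by simp)
    exact this.differentiableAt
  refine ⟨F, hFdiff, fun z => ?_⟩
  -- coefficients of F
  have hcoeff : ∀ n, iteratedDeriv n F 0 = (n.factorial : ℂ) * b n := by
    intro n
    have := hball.factorial_smul (1 : ℂ) n
    rw [iteratedDeriv_eq_iteratedFDeriv]
    rw [← this]
    have : q n (fun _ => (1:ℂ)) = b n := by
      rw [hq, FormalMultilinearSeries.ofScalars_apply_eq]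
      simp
    rw [this, nsmul_eq_mul]
  have key : ∀ n, iteratedDeriv n (deriv F) 0 = iteratedDeriv n f 0 := by
    intro n
    rw [← iteratedDeriv_succ']
    rw [hcoeff (n+1)]
    simp only [hb, if_neg (Nat.succ_ne_zero n), Nat.add_sub_cancel, ha]
    rw [Nat.factorial_succ]
    have hne1 : ((n:ℂ) + 1) ≠ 0 := Nat.cast_add_one_ne_zero n
    have hne2 : ((n.factorial : ℂ)) ≠ 0 := Nat.cast_ne_zero.mpr n.factorial_ne_zero
    push_cast
    field_simp
  have h1 := Complex.taylorSeries_eq_of_entire' 0 z (diff_of_deriv hFdiff)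
  have h2 := Complex.taylorSeries_eq_of_entire' 0 z hf
  rw [← h1, ← h2]
  congr 1
  ext n
  rw [key n]

lemma exists_log {f : ℂ → ℂ} (hf : Differentiable ℂ f) (h0 : ∀ z, f z ≠ 0) :
    ∃ g : ℂ → ℂ, Differentiable ℂ g ∧ ∀ z, Complex.exp (g z) = f z := by
  obtain ⟨F, hFd, hF⟩ := exists_primitive (fun z => deriv f z / f z)
    ((diff_of_deriv hf).div hf h0)
  set H : ℂ → ℂ := fun z => f z * Complex.exp (-F z) with hHdef
  have hHd : Differentiable ℂ H := hf.mul (hFd.neg.cexp)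
  have hH' : ∀ z, deriv H z = 0 := by
    intro z
    have h1 : HasDerivAt f (deriv f z) z := hf.differentiableAt.hasDerivAt
    have h2 : HasDerivAt F (deriv f z / f z) z := by
      have := hFd.differentiableAt.hasDerivAt (x := z)
      rwa [hF z] at this
    have h3 : HasDerivAt (fun z => Complex.exp (-F z)) (Complex.exp (-F z) * -(deriv f z / f z)) z :=
      h2.neg.cexp
    have h4 : HasDerivAt H (deriv f z * Complex.exp (-F z) +
        f z * (Complex.exp (-F z) * -(deriv f z / f z))) z := h1.mul h3
    rw [h4.deriv]
    field_simp [h0 z]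
    ring
  have hconst : ∀ z, H z = H 0 := fun z => is_const_of_deriv_eq_zero hHd hH' z 0
  have hH0 : H 0 ≠ 0 := mul_ne_zero (h0 0) (Complex.exp_ne_zero _)
  refine ⟨fun z => F z + Complex.log (H 0), hFd.add_const _, fun z => ?_⟩
  rw [Complex.exp_add, Complex.exp_log hH0]
  have := hconst z
  rw [hHdef] at this
  simp only at this
  have hexp := Complex.exp_ne_zero (-F z)
  simp only [hHdef]
  rw [Complex.exp_neg]
  rw [Complex.exp_neg, Complex.exp_neg] at this
  rw [← this, mul_left_comm, mul_inv_cancel₀ (Complex.exp_ne_zero _), mul_one]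

lemma exists_cos_lift {f : ℂ → ℂ} (hf : Differentiable ℂ f)
    (h : ∀ z, f z ≠ 1 ∧ f z ≠ -1) :
    ∃ g : ℂ → ℂ, Differentiable ℂ g ∧ ∀ z, Complex.cos (g z) = f z := by
  have h1 : ∀ z, 1 - f z ^ 2 ≠ 0 := by
    intro z hz
    have : (1 - f z) * (1 + f z) = 0 := by ring_nf; ring_nf at hz; linear_combination hz
    rcases mul_eq_zero.mp this with h' | h'
    · exact (h z).1 (by linear_combination -h')
    · exact (h z).2 (by linear_combination h')
  obtain ⟨w, hwd, hw⟩ := exists_log (f := fun z => 1 - f z ^ 2)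
    ((differentiable_const _).sub (hf.pow 2)) h1
  set s : ℂ → ℂ := fun z => Complex.exp (w z / 2) with hs
  have hsd : Differentiable ℂ s := (hwd.div_const 2).cexp
  have hs2 : ∀ z, s z ^ 2 = 1 - f z ^ 2 := by
    intro z
    rw [hs]
    simp only
    rw [sq, ← Complex.exp_add, show w z / 2 + w z / 2 = w z by ring]
    exact hw z
  have hv : ∀ z, (f z + Complex.I * s z) * (f z - Complex.I * s z) = 1 := by
    intro z
    have := hs2 z
    have hI : Complex.I ^ 2 = -1 := Complex.I_sq
    linear_combination (-(s z ^ 2)) * hI + this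
  have hvne : ∀ z, f z + Complex.I * s z ≠ 0 := by
    intro z hz
    have := hv z
    rw [hz, zero_mul] at this
    exact zero_ne_one this
  obtain ⟨g0, hg0d, hg0⟩ := exists_log (f := fun z => f z + Complex.I * s z)
    (hf.add (hsd.const_mul _)) hvne
  refine ⟨fun z => -Complex.I * g0 z, hg0d.const_mul _, fun z => ?_⟩
  have e1 : -Complex.I * g0 z * Complex.I = g0 z := by
    have := Complex.I_mul_I
    ring_nf
    rw [Complex.I_sq]
    ring
  rw [Complex.cos, e1, show -(-Complex.I * g0 z) * Complex.I = -g0 z by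
    ring_nf; rw [Complex.I_sq]; ring]
  rw [Complex.exp_neg, hg0]
  have hinv : (f z + Complex.I * s z)⁻¹ = f z - Complex.I * s z :=
    eq_comm.mp (eq_inv_of_mul_eq_one_left (by linear_combination hv z))
  rw [hinv]
  ring

lemma cos_pi_int_add_mul_I (m : ℤ) (t : ℝ) :
    Complex.cos ((Real.pi : ℂ) * ((m : ℂ) + (t : ℂ) * I)) =
      (((-1) ^ m * Real.cosh (Real.pi * t) : ℝ) : ℂ) := by
  rw [mul_add, Complex.cos_add]
  have e1 : ((Real.pi:ℂ) * m) = ((Real.pi * m : ℝ) : ℂ) := by push_cast; ring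
  have e2 : Complex.cos ((Real.pi:ℂ) * m) = (((-1:ℝ)^m : ℝ) : ℂ) := by
    rw [e1, ← Complex.ofReal_cos,
      show Real.pi * m = 0 + m * Real.pi by ring, Real.cos_add_int_mul_pi, Real.cos_zero, mul_one]
  have e3 : Complex.sin ((Real.pi:ℂ) * m) = 0 := by
    rw [e1, ← Complex.ofReal_sin]
    norm_cast
    rw [show Real.pi * m = m * Real.pi by ring, Real.sin_int_mul_pi]
  have e4 : Complex.cos ((Real.pi:ℂ) * ((t:ℂ) * I)) = ((Real.cosh (Real.pi * t) : ℝ) : ℂ) := by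
    rw [show (Real.pi:ℂ) * ((t:ℂ) * I) = ((Real.pi * t : ℝ) : ℂ) * I by push_cast; ring,
      Complex.cos_mul_I, Complex.ofReal_cosh]
  rw [e2, e3, e4, zero_mul, sub_zero]
  push_cast
  ring

lemma grid_dense (w : ℂ) : ∃ w' : ℂ,
    (∃ k : ℤ, Complex.cos ((Real.pi : ℂ) * w') = 2 * k + 1) ∧ dist w w' ≤ 3 / 2 := by
  set x := w.re
  set y := w.im
  set m : ℤ := round x with hm
  set c : ℝ := Real.cosh (Real.pi * |y|) with hc
  have hc1 : 1 ≤ c := Real.one_le_cosh _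
  set K : ℤ := ⌈(c - 1) / 2⌉ with hK
  have hK0 : 0 ≤ K := Int.ceil_nonneg (by linarith : (0:ℝ) ≤ (c - 1) / 2)
  have ho1 : c ≤ 2 * K + 1 := by
    have := Int.le_ceil ((c - 1) / 2)
    rw [← hK] at this
    linarith
  have ho2 : (2 * K + 1 : ℝ) ≤ c + 2 := by
    have := Int.ceil_lt_add_one ((c - 1) / 2)
    rw [← hK] at this
    linarith
  have hcosh3 : (3 : ℝ) ≤ Real.cosh Real.pi := by
    have h1 : Real.pi / 2 + 1 ≤ Real.exp (Real.pi / 2) := Real.add_one_le_exp _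
    have h2 : Real.exp Real.pi = Real.exp (Real.pi / 2) ^ 2 := by
      rw [sq, ← Real.exp_add]; norm_num
    have h3 : Real.exp Real.pi ≤ 2 * Real.cosh Real.pi := by
      rw [Real.cosh_eq]
      have := Real.exp_pos (-Real.pi)
      linarith
    have hpi := Real.pi_gt_three
    nlinarith [Real.exp_pos (Real.pi / 2)]
  have hmono : c + 2 ≤ Real.cosh (Real.pi * (|y| + 1)) := by
    rw [mul_add, mul_one, Real.cosh_add]
    have s1 : 0 ≤ Real.sinh (Real.pi * |y|) := Real.sinh_nonneg_iff.mpr (by positivity)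
    have s2 : 0 ≤ Real.sinh Real.pi := Real.sinh_nonneg_iff.mpr Real.pi_pos.le
    nlinarith
  have hcont : ContinuousOn (fun t : ℝ => Real.cosh (Real.pi * t)) (Set.Icc (|y|) (|y| + 1)) :=
    (Real.continuous_cosh.comp (continuous_const.mul continuous_id)).continuousOn
  have hIVT := intermediate_value_Icc (by linarith : |y| ≤ |y| + 1) hcont
  obtain ⟨t, ht, hcost⟩ := hIVT ⟨ho1, by linarith⟩
  set y'' : ℝ := if 0 ≤ y then t else -t with hy''
  have hcosh_y'' : Real.cosh (Real.pi * y'') = 2 * K + 1 := by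
    rw [hy'']
    split_ifs
    · exact hcost
    · rw [mul_neg, Real.cosh_neg]; exact hcost
  refine ⟨(m : ℂ) + (y'' : ℝ) * I, ?_, ?_⟩
  · rw [cos_pi_int_add_mul_I m y'', hcosh_y'']
    rcases Int.even_or_odd m with he | he
    · refine ⟨K, ?_⟩
      rw [he.neg_one_zpow]
      push_cast
      ring
    · refine ⟨-K - 1, ?_⟩
      rw [Odd.neg_one_zpow he]
      push_cast
      ring
  · have hre : |x - (m : ℝ)| ≤ 1 / 2 := by
      rw [hm]; exact abs_sub_round x
    have him : |y - y''| ≤ 1 := by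
      rw [hy'']
      rcases ht with ⟨ht1, ht2⟩
      split_ifs with hy
      · rw [_root_.abs_of_nonneg hy] at ht1 ht2
        rw [abs_le]; constructor <;> linarith
      · push_neg at hy
        rw [_root_.abs_of_neg hy] at ht1 ht2
        rw [abs_le]; constructor <;> linarith
    have : dist w ((m : ℂ) + (y'' : ℝ) * I) ≤ |x - (m:ℝ)| + |y - y''| := by
      rw [Complex.dist_eq]
      have hsub : w - ((m : ℂ) + (y'' : ℝ) * I) = Complex.mk (x - m) (y - y'') := by
        apply Complex.ext <;> simp [x, y]
      rw [hsub]
      exact (Complex.norm_le_abs_re_add_abs_im _).trans (by simp)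
    linarith

lemma exists_avoider {f : ℂ → ℂ} (hf : Differentiable ℂ f)
    (homit : ∀ z, f z ≠ 0 ∧ f z ≠ 1) :
    ∃ g : ℂ → ℂ, Differentiable ℂ g ∧
      (∀ (z : ℂ) (k : ℤ), Complex.cos ((Real.pi : ℂ) * g z) ≠ 2 * k + 1) ∧
      (∀ z w, g z = g w → f z = f w) := by
  have hπ : (Real.pi : ℂ) ≠ 0 := by
    exact_mod_cast Complex.ofReal_ne_zero.mpr Real.pi_ne_zero
  have cos_int : ∀ (u : ℂ) (n : ℤ), u = n → Complex.cos ((Real.pi : ℂ) * u) = (-1) ^ n := by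
    intro u n hu
    rw [hu, show (Real.pi : ℂ) * n = ((Real.pi * n : ℝ) : ℂ) by push_cast; ring,
      ← Complex.ofReal_cos, show Real.pi * n = 0 + n * Real.pi by ring,
      Real.cos_add_int_mul_pi, Real.cos_zero, mul_one]
    push_cast
    ring
  -- first lift
  have h1 : ∀ z, 2 * f z - 1 ≠ 1 ∧ 2 * f z - 1 ≠ -1 := fun z =>
    ⟨fun h => (homit z).2 (by linear_combination h / 2),
     fun h => (homit z).1 (by linear_combination h / 2)⟩
  obtain ⟨G, hGd, hG⟩ := exists_cos_lift
    (f := fun z => 2 * f z - 1) ((hf.const_mul 2).sub_const 1) h1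
  set h : ℂ → ℂ := fun z => G z / (Real.pi : ℂ) with hhdef
  have hhd : Differentiable ℂ h := hGd.div_const _
  have hh : ∀ z, Complex.cos ((Real.pi : ℂ) * h z) = 2 * f z - 1 := by
    intro z
    rw [hhdef]
    simp only
    rw [mul_div_cancel₀ _ hπ]
    exact hG z
  have hint : ∀ (z : ℂ) (n : ℤ), h z ≠ n := by
    intro z n hz
    have hcos := hh z
    rw [cos_int (h z) n hz] at hcos
    rcases Int.even_or_odd n with he | he
    · rw [he.neg_one_zpow] at hcos
      exact (homit z).2 (by linear_combination -hcos / 2)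
    · rw [Odd.neg_one_zpow he] at hcos
      exact (homit z).1 (by linear_combination -hcos / 2)
  -- second lift
  have h2 : ∀ z, 2 * h z - 1 ≠ 1 ∧ 2 * h z - 1 ≠ -1 := fun z =>
    ⟨fun hc => hint z 1 (by push_cast; linear_combination hc / 2),
     fun hc => hint z 0 (by push_cast; linear_combination hc / 2)⟩
  obtain ⟨G₂, hG₂d, hG₂⟩ := exists_cos_lift
    (f := fun z => 2 * h z - 1) ((hhd.const_mul 2).sub_const 1) h2
  set g : ℂ → ℂ := fun z => G₂ z / (Real.pi : ℂ) with hgdef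
  have hgd : Differentiable ℂ g := hG₂d.div_const _
  have hg : ∀ z, Complex.cos ((Real.pi : ℂ) * g z) = 2 * h z - 1 := by
    intro z
    rw [hgdef]
    simp only
    rw [mul_div_cancel₀ _ hπ]
    exact hG₂ z
  refine ⟨g, hgd, fun z k hk => ?_, fun z w hzw => ?_⟩
  · rw [hg z] at hk
    exact hint z (k + 1) (by push_cast; linear_combination hk / 2)
  · have t1 := hg z
    rw [hzw, hg w] at t1
    have e1 : h z = h w := by linear_combination -t1 / 2
    have t2 := hh z
    rw [e1, hh w] at t2
    linear_combination -t2 / 2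

lemma bloch_entire {g : ℂ → ℂ} (hg : Differentiable ℂ g) (hnc : ∃ z w, g z ≠ g w) :
    ∃ a : ℂ, Metric.ball a 2 ⊆ Set.range g := by
  set φ := deriv g with hφ
  have hφd : Differentiable ℂ φ := diff_of_deriv hg
  obtain ⟨z₀, hz₀⟩ : ∃ z₀, φ z₀ ≠ 0 := by
    by_contra hc
    push_neg at hc
    obtain ⟨z, w, hzw⟩ := hnc
    exact hzw (is_const_of_deriv_eq_zero hg (by simpa [hφ] using hc) z w)
  have hφ0pos : 0 < ‖φ z₀‖ := norm_pos_iff.mpr hz₀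
  set R : ℝ := 512 / ‖φ z₀‖ with hR
  have hRpos : 0 < R := by positivity
  set u : ℂ → ℝ := fun z => (R - dist z z₀) * ‖φ z‖ with hu
  have hu_cont : ContinuousOn u (closedBall z₀ R) := by
    apply ContinuousOn.mul
    · exact (continuous_const.sub (continuous_id.dist continuous_const)).continuousOn
    · exact (hφd.continuous.norm).continuousOn
  obtain ⟨a, ha_mem, ha_max⟩ := (isCompact_closedBall z₀ R).exists_isMaxOn
    ⟨z₀, mem_closedBall_self hRpos.le⟩ hu_cont
  have hmax : ∀ z ∈ closedBall z₀ R, u z ≤ u a := fun z hz => ha_max hz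
  have hua : 512 ≤ u a := by
    have := hmax z₀ (mem_closedBall_self hRpos.le)
    simp only [hu, dist_self, sub_zero] at this
    rw [hR] at this
    rw [div_mul_cancel₀] at this
    · exact this
    · exact hφ0pos.ne'
  set M : ℝ := ‖φ a‖ with hM
  have hMnonneg : 0 ≤ M := norm_nonneg _
  have hdista : dist a z₀ ≤ R := mem_closedBall.mp ha_mem
  have hkey : 512 ≤ (R - dist a z₀) * M := hua
  have hMpos : 0 < M := by nlinarith [dist_nonneg (x := a) (y := z₀)]
  have hraddist : 0 < R - dist a z₀ := by nlinarith
  set ρ : ℝ := (R - dist a z₀) / 2 with hρ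
  have hρpos : 0 < ρ := by positivity
  have hρM : 256 ≤ ρ * M := by nlinarith
  have hbound : ∀ z ∈ ball a ρ, ‖φ z‖ ≤ 2 * M := by
    intro z hz
    rw [mem_ball] at hz
    have hz0 : dist z z₀ ≤ dist z a + dist a z₀ := dist_triangle z a z₀
    have hmem : z ∈ closedBall z₀ R := by
      rw [mem_closedBall]
      have : ρ + dist a z₀ ≤ R := by rw [hρ]; linarith
      linarith
    have h1 := hmax z hmem
    have hge : ρ ≤ R - dist z z₀ := by rw [hρ] at hz ⊢; linarith
    simp only [hu] at h1
    nlinarith [norm_nonneg (φ z), dist_nonneg (x := z) (y := z₀)]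
  have hmaps : Set.MapsTo φ (ball a ρ) (ball (φ a) (4 * M)) := by
    intro z hz
    rw [mem_ball, dist_eq_norm]
    calc ‖φ z - φ a‖ ≤ ‖φ z‖ + ‖φ a‖ := norm_sub_le _ _
      _ ≤ 2 * M + M := by have := hbound z hz; rw [← hM]; linarith
      _ < 4 * M := by linarith
  set δ : ℝ := ρ / 16 with hδ
  have hδpos : 0 < δ := by positivity
  have hsmall : ∀ z ∈ closedBall a δ, ‖φ z - φ a‖ ≤ M / 4 := by
    intro z hz
    rw [mem_closedBall] at hz
    have hz' : z ∈ ball a ρ := by rw [mem_ball]; rw [hδ] at hz; linarith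
    have h2 := Complex.dist_le_div_mul_dist_of_mapsTo_ball hφd.differentiableOn (hmaps.mono_right ball_subset_closedBall) hz'
    rw [dist_eq_norm] at h2
    calc ‖φ z - φ a‖ ≤ 4 * M / ρ * dist z a := h2
      _ ≤ 4 * M / ρ * δ := by
          apply mul_le_mul_of_nonneg_left hz
          positivity
      _ = M / 4 := by rw [hδ]; field_simp; ring
  set L : ℂ →L[ℂ] ℂ := φ a • ContinuousLinearMap.id ℂ ℂ with hL
  have hLapp : ∀ v : ℂ, L v = φ a * v := fun v => rfl
  set c : NNReal := (M / 4).toNNReal with hc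
  have hccoe : (c : ℝ) = M / 4 := Real.coe_toNNReal _ (by positivity)
  have happrox : ApproximatesLinearOn g L (closedBall a δ) c := by
    intro x hx y hy
    have hconv : Convex ℝ (closedBall a δ) := convex_closedBall a δ
    have hder : ∀ z ∈ closedBall a δ,
        HasDerivWithinAt (fun z => g z - φ a * z) (φ z - φ a) (closedBall a δ) z := by
      intro z hz
      have := ((hg.differentiableAt.hasDerivAt (x := z)).sub
        ((hasDerivAt_id z).const_mul (φ a))).hasDerivWithinAt (s := closedBall a δ)
      rw [mul_one] at this
      exact this
    have := hconv.norm_image_sub_le_of_norm_hasDerivWithin_le hder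
      (fun z hz => hsmall z hz) hy hx
    rw [hccoe]
    calc ‖g x - g y - L (x - y)‖ = ‖(g x - φ a * x) - (g y - φ a * y)‖ := by
          rw [hLapp]; ring_nf
      _ ≤ M / 4 * ‖x - y‖ := this
  set Linv : L.NonlinearRightInverse :=
    { toFun := fun y => (φ a)⁻¹ * y
      nnnorm := ‖φ a‖₊⁻¹
      bound' := fun y => by
        rw [norm_mul, norm_inv]
        simp [NNReal.coe_inv]
      right_inv' := fun y => by
        rw [hLapp, ← mul_assoc, mul_inv_cancel₀ (norm_pos_iff.mp (hM ▸ hMpos)), one_mul] } with hLinv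
  have hsurj := happrox.surjOn_closedBall_of_nonlinearRightInverse Linv hδpos.le
    (subset_refl _)
  have hnnnorm : ((Linv.nnnorm : ℝ))⁻¹ = M := by
    rw [hLinv]
    simp [NNReal.coe_inv, hM]
  refine ⟨g a, fun y hy => ?_⟩
  have hrad : 2 ≤ ((Linv.nnnorm : ℝ)⁻¹ - c) * δ := by
    rw [hnnnorm, hccoe, hδ]
    nlinarith
  have hy' : y ∈ closedBall (g a) (((Linv.nnnorm : ℝ)⁻¹ - c) * δ) := by
    rw [mem_closedBall]
    have := mem_ball.mp hy
    linarith
  obtain ⟨x, hx, hgx⟩ := hsurj hy'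
  exact ⟨x, hgx⟩

/-- Little Picard theorem: a holomorphic map from `ℂ` omitting the two values
`0` and `1` is constant (equivalently, the Riemann sphere minus three points
is Brody hyperbolic). -/
theorem little_picard (f : ℂ → ℂ) (hf : Differentiable ℂ f)
    (homit : ∀ z : ℂ, f z ≠ 0 ∧ f z ≠ 1) :
    ∃ c : ℂ, f = fun _ => c := by
  obtain ⟨g, hgd, havoid, hrec⟩ := exists_avoider hf homit
  have hconst : ∀ z w, g z = g w := by
    by_contra hc
    push_neg at hc
    obtain ⟨z, w, hzw⟩ := hc
    obtain ⟨a, hball⟩ := bloch_entire hgd ⟨z, w, hzw⟩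
    obtain ⟨w', ⟨k, hk⟩, hdist⟩ := grid_dense a
    have hmem : w' ∈ Metric.ball a 2 := by
      rw [Metric.mem_ball, dist_comm]
      linarith
    obtain ⟨z', hz'⟩ := hball hmem
    exact havoid z' k (by rw [hz']; exact hk)
  exact ⟨f 0, funext fun z => hrec z 0 (hconst z 0)⟩
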